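/- arXiv:2310.16254 — 4 statements merged into one kernel-verified Lean document; each statement's English description precedes it below -/
import Mathlib

section
/- Let K be a closed convex cone in a real Hilbert space H with vertex at v. For every y ∈ K with y ≠ v and every u = v + t(y - v) with t > 0, one has P_K^{-1}(u) = u - y + P_K^{-1}(y). -/
open scoped RealInnerProductSpace Topology
open Filter Set MeasureTheory

theorem stmt6 {H : Type*} [NormedAddCommGroup H] [InnerProductSpace ℝ H] [CompleteSpace H]
    (K : Set H) (v : H) (hv : v ∈ K) (hcl : IsClosed K) (hconv : Convex ℝ K)
    (hcone : ∀ k ∈ K, ∀ s : ℝ, 0 ≤ s → v + s • (k - v) ∈ K)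
    (P : H → H) (hP : ∀ x, P x ∈ K ∧ ∀ z ∈ K, ‖x - P x‖ ≤ ‖x - z‖)
    (y : H) (hy : y ∈ K) (hyv : y ≠ v) (t : ℝ) (ht : 0 < t)
    (u : H) (hu : u = v + t • (y - v)) :
    {x : H | P x = u} = (fun z => u - y + z) '' {x : H | P x = y} := by
  haveI : Nonempty K := ⟨⟨v, hv⟩⟩
  -- P x satisfies the variational inequality
  have hPineq : ∀ x, ∀ z ∈ K, ⟪x - P x, z - P x⟫ ≤ 0 := by
    intro x
    have hmin : ‖x - P x‖ = ⨅ w : K, ‖x - w‖ := by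
      apply le_antisymm
      · exact le_ciInf fun w => (hP x).2 w w.2
      · have hbdd : BddBelow (Set.range fun w : K => ‖x - w‖) := by
          refine ⟨0, ?_⟩
          rintro _ ⟨w, rfl⟩
          exact norm_nonneg _
        exact ciInf_le hbdd ⟨P x, (hP x).1⟩
    exact (norm_eq_iInf_iff_real_inner_le_zero hconv (hP x).1).1 hmin
  -- characterization of P x
  have hchar : ∀ x w, w ∈ K → (P x = w ↔ ∀ z ∈ K, ⟪x - w, z - w⟫ ≤ 0) := by
    intro x w hw
    constructor
    · rintro rfl; exact hPineq x
    · intro hineq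
      have h1 : ⟪x - P x, w - P x⟫ ≤ 0 := hPineq x w hw
      have h2 : ⟪x - w, P x - w⟫ ≤ 0 := hineq (P x) (hP x).1
      have key : ‖w - P x‖ ^ 2 ≤ 0 := by
        have : ⟪x - P x, w - P x⟫ + ⟪x - w, P x - w⟫
            = ‖w - P x‖ ^ 2 - 2 * ⟪x - w, w - P x⟫ + 2 * ⟪x - w, w - P x⟫ - 0 := by
          have : (x - P x) = (x - w) + (w - P x) := by abel
          rw [this, inner_add_left, real_inner_self_eq_norm_sq]
          have : (P x - w) = -(w - P x) := by abel
          rw [this, inner_neg_right]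
          ring
        nlinarith [h1, h2]
      have : w - P x = 0 := by
        have := norm_nonneg (w - P x)
        have hn : ‖w - P x‖ = 0 := by nlinarith
        simpa using hn
      have : w = P x := by
        have := sub_eq_zero.mp this; exact this
      exact this.symm
  -- ray characterization of the variational inequality
  have hray : ∀ (d : H) (s : ℝ), 0 < s →
      ((∀ z ∈ K, ⟪d, z - (v + s • (y - v))⟫ ≤ 0) ↔
       (⟪d, y - v⟫ = 0 ∧ ∀ z ∈ K, ⟪d, z - v⟫ ≤ 0)) := by
    intro d s hs
    constructor
    · intro h
      have hzero : ⟪d, y - v⟫ = 0 := by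
        have h0 : v ∈ K := by simpa using hcone y hy 0 le_rfl
        have h1 := h v h0
        have h2 := h (v + (2 * s) • (y - v)) (hcone y hy (2 * s) (by linarith))
        have e1 : v - (v + s • (y - v)) = -(s • (y - v)) := by abel
        have e2 : (v + (2 * s) • (y - v)) - (v + s • (y - v)) = s • (y - v) := by
          rw [two_mul, add_smul]; abel
        rw [e1, inner_neg_right] at h1
        rw [e2] at h2
        rw [real_inner_smul_right] at h1 h2
        nlinarith
      refine ⟨hzero, fun z hz => ?_⟩
      have := h z hz
      have e : z - (v + s • (y - v)) = (z - v) - s • (y - v) := by abel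
      rw [e, inner_sub_right, real_inner_smul_right, hzero] at this
      linarith
    · rintro ⟨hzero, h⟩ z hz
      have e : z - (v + s • (y - v)) = (z - v) - s • (y - v) := by abel
      rw [e, inner_sub_right, real_inner_smul_right, hzero]
      have := h z hz
      linarith
  have huK : u ∈ K := hu ▸ hcone y hy t ht.le
  ext x
  simp only [mem_setOf_eq, mem_image]
  constructor
  · intro hx
    refine ⟨x - u + y, ?_, by abel⟩
    rw [hchar _ y hy]
    have hd : ∀ z ∈ K, ⟪x - u, z - u⟫ ≤ 0 := by
      rw [← hchar x u huK]; exact hx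
    have := (hray (x - u) t ht).1 (by rw [hu] at hd ⊢; exact hd)
    have hy1 : y = v + (1 : ℝ) • (y - v) := by simp
    intro z hz
    have h2 := (hray (x - u) 1 one_pos).2 this z hz
    have e : x - u + y - y = x - u := by abel
    rw [e]
    rw [← hy1] at h2
    exact h2
  · rintro ⟨x', hx', rfl⟩
    rw [hchar _ u huK]
    have hd : ∀ z ∈ K, ⟪x' - y, z - y⟫ ≤ 0 := by
      rw [← hchar x' y hy]; exact hx'
    have hy1 : y = v + (1 : ℝ) • (y - v) := by simp
    have h1 := (hray (x' - y) 1 one_pos).1 (by rw [← hy1]; exact hd)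
    intro z hz
    have h2 := (hray (x' - y) t ht).2 h1 z hz
    have e : u - y + x' - u = x' - y := by abel
    rw [← hu] at h2
    rw [e]
    exact h2
end

section
/- Let C be a nonempty closed convex subset of a real Hilbert space H. For every x ∈ H \ C, the directional derivative of P_C at x along the direction x - P_C(x) exists and equals 0; likewise the directional derivative at x along P_C(x) - x exists and equals 0. -/
open scoped RealInnerProductSpace Topology
open Filter Set MeasureTheory

private lemma proj_unique {H : Type*} [NormedAddCommGroup H] [InnerProductSpace ℝ H]
    (C : Set H) (P : H → H) (hP : ∀ x, P x ∈ C ∧ ∀ z ∈ C, ‖x - P x‖ ≤ ‖x - z‖)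
    (y v : H) (hv : v ∈ C) (hvar : ∀ z ∈ C, ⟪y - v, z - v⟫ ≤ 0) : P y = v := by
  have h1 : ‖y - P y‖ ≤ ‖y - v‖ := (hP y).2 v hv
  have h2 : ⟪y - v, P y - v⟫ ≤ 0 := hvar (P y) (hP y).1
  have hexp : ‖y - P y‖ ^ 2 = ‖y - v‖ ^ 2 - 2 * ⟪y - v, P y - v⟫ + ‖P y - v‖ ^ 2 := by
    have : y - P y = (y - v) - (P y - v) := by abel
    rw [this, @norm_sub_sq_real]
  have hsq : ‖y - P y‖ ^ 2 ≤ ‖y - v‖ ^ 2 := by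
    apply pow_le_pow_left₀ (norm_nonneg _) h1
  have : ‖P y - v‖ ^ 2 ≤ 0 := by nlinarith
  have : ‖P y - v‖ = 0 := by nlinarith [norm_nonneg (P y - v), sq_nonneg ‖P y - v‖]
  exact sub_eq_zero.mp (norm_eq_zero.mp this)

theorem stmt7 {H : Type*} [NormedAddCommGroup H] [InnerProductSpace ℝ H] [CompleteSpace H]
    (C : Set H) (hne : C.Nonempty) (hcl : IsClosed C) (hconv : Convex ℝ C)
    (P : H → H) (hP : ∀ x, P x ∈ C ∧ ∀ z ∈ C, ‖x - P x‖ ≤ ‖x - z‖)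
    (x : H) (hx : x ∉ C) :
    Tendsto (fun t : ℝ => t⁻¹ • (P (x + t • (x - P x)) - P x)) (𝓝[>] (0 : ℝ)) (𝓝 0) ∧
    Tendsto (fun t : ℝ => t⁻¹ • (P (x + t • (P x - x)) - P x)) (𝓝[>] (0 : ℝ)) (𝓝 0) := by
  have hne' : Nonempty C := hne.to_subtype
  -- variational inequality for P x
  have hiInf : ‖x - P x‖ = ⨅ w : C, ‖x - w‖ := by
    apply le_antisymm
    · exact le_ciInf fun w => (hP x).2 w w.2
    · exact ciInf_le ⟨0, fun r ⟨w, hw⟩ => hw ▸ norm_nonneg _⟩ (⟨P x, (hP x).1⟩ : C)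
  have hvar : ∀ z ∈ C, ⟪x - P x, z - P x⟫ ≤ 0 :=
    (norm_eq_iInf_iff_real_inner_le_zero hconv (hP x).1).mp hiInf
  constructor
  · have heq : ∀ᶠ t : ℝ in 𝓝[>] 0, t⁻¹ • (P (x + t • (x - P x)) - P x) = 0 := by
      filter_upwards [self_mem_nhdsWithin] with t (ht : 0 < t)
      have : P (x + t • (x - P x)) = P x := by
        apply proj_unique C P hP _ _ (hP x).1
        intro z hz
        have : x + t • (x - P x) - P x = (1 + t) • (x - P x) := by
          rw [add_smul, one_smul]; abel
        rw [this, real_inner_smul_left]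
        exact mul_nonpos_of_nonneg_of_nonpos (by linarith) (hvar z hz)
      rw [this, sub_self, smul_zero]
    exact tendsto_const_nhds.congr' (heq.mono fun t h => h.symm)
  · have heq : ∀ᶠ t : ℝ in 𝓝[>] 0, t⁻¹ • (P (x + t • (P x - x)) - P x) = 0 := by
      have h01 : Ioo (0:ℝ) 1 ∈ 𝓝[>] (0:ℝ) :=
        Ioo_mem_nhdsGT_of_mem ⟨le_refl 0, one_pos⟩
      filter_upwards [h01] with t ht
      have : P (x + t • (P x - x)) = P x := by
        apply proj_unique C P hP _ _ (hP x).1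
        intro z hz
        have : x + t • (P x - x) - P x = (1 - t) • (x - P x) := by
          rw [sub_smul, one_smul]; module
        rw [this, real_inner_smul_left]
        exact mul_nonpos_of_nonneg_of_nonpos (by linarith [ht.2]) (hvar z hz)
      rw [this, sub_self, smul_zero]
    exact tendsto_const_nhds.congr' (heq.mono fun t h => h.symm)
end

section
/- Let B(c,r) be a closed ball in a real Hilbert space H and x ∈ H with ‖x - c‖ > r. Then for every v ∈ H with v ≠ 0, the directional derivative of P_{B(c,r)} at x along v exists and equals (r/‖x - c‖³)(‖x - c‖² v − ⟨x - c, v⟩ (x - c)). -/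
open scoped RealInnerProductSpace Topology
open Filter Set MeasureTheory

theorem proj_ball_formula {H : Type*} [NormedAddCommGroup H] [InnerProductSpace ℝ H]
    (c : H) (r : ℝ) (hr : 0 < r) (P : H → H)
    (hP : ∀ x, P x ∈ Metric.closedBall c r ∧ ∀ z ∈ Metric.closedBall c r, ‖x - P x‖ ≤ ‖x - z‖)
    (y : H) (hy : r < ‖y - c‖) :
    P y = c + (r / ‖y - c‖) • (y - c) := by
  have hd : (0:ℝ) < ‖y - c‖ := lt_trans hr hy
  set q : H := c + (r / ‖y - c‖) • (y - c) with hq_def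
  have hq : q ∈ Metric.closedBall c r := by
    have hqc : ‖q - c‖ = r := by
      rw [hq_def]
      simp only [add_sub_cancel_left, norm_smul, Real.norm_eq_abs]
      rw [abs_of_nonneg (by positivity), div_mul_cancel₀ _ hd.ne']
    simp [Metric.mem_closedBall, dist_eq_norm, hqc]
  haveI : Nonempty (Metric.closedBall c r : Set H) := ⟨⟨P y, (hP y).1⟩⟩
  have hinf : ‖y - P y‖ = ⨅ w : (Metric.closedBall c r : Set H), ‖y - (w : H)‖ := by
    refine le_antisymm (le_ciInf fun w => (hP y).2 w w.2) ?_
    exact ciInf_le ⟨0, by rintro _ ⟨w, rfl⟩; positivity⟩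
      (⟨P y, (hP y).1⟩ : (Metric.closedBall c r : Set H))
  have hvar : ∀ z ∈ Metric.closedBall c r, ⟪y - P y, z - P y⟫ ≤ 0 :=
    (norm_eq_iInf_iff_real_inner_le_zero (convex_closedBall c r) (hP y).1).mp hinf
  have hvarq : ∀ z ∈ Metric.closedBall c r, ⟪y - q, z - q⟫ ≤ 0 := by
    intro z hz
    have hyq : y - q = (1 - r / ‖y - c‖) • (y - c) := by
      rw [hq_def, sub_add_eq_sub_sub, sub_smul, one_smul]
    rw [hyq, real_inner_smul_left]
    have h1 : (0:ℝ) ≤ 1 - r / ‖y - c‖ := by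
      rw [sub_nonneg, div_le_one hd]; exact hy.le
    have h2 : ⟪y - c, z - q⟫ ≤ 0 := by
      have hzq : z - q = (z - c) - (r / ‖y - c‖) • (y - c) := by rw [hq_def]; abel
      rw [hzq, inner_sub_right, real_inner_smul_right, real_inner_self_eq_norm_mul_norm]
      have hzc : ‖z - c‖ ≤ r := by rw [← dist_eq_norm]; exact hz
      have hle : ⟪y - c, z - c⟫ ≤ ‖y - c‖ * r := by
        have h3 := real_inner_le_norm (y - c) (z - c)
        nlinarith [norm_nonneg (z - c)]
      have he : r / ‖y - c‖ * (‖y - c‖ * ‖y - c‖) = r * ‖y - c‖ := by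
        field_simp
      rw [he]
      nlinarith
    exact mul_nonpos_of_nonneg_of_nonpos h1 h2
  have h1 := hvar q hq
  have h2 := hvarq (P y) (hP y).1
  have key : ⟪q - P y, q - P y⟫ ≤ 0 := by
    have e : ⟪q - P y, q - P y⟫ = ⟪y - P y, q - P y⟫ + ⟪y - q, P y - q⟫ := by
      simp only [inner_sub_left, inner_sub_right]
      ring
    rw [e]; linarith
  have hz := sub_eq_zero.mp (real_inner_self_nonpos.mp key)
  exact hz.symm

theorem stmt13 {H : Type*} [NormedAddCommGroup H] [InnerProductSpace ℝ H] [CompleteSpace H]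
    (c : H) (r : ℝ) (hr : 0 < r)
    (P : H → H)
    (hP : ∀ x, P x ∈ Metric.closedBall c r ∧ ∀ z ∈ Metric.closedBall c r, ‖x - P x‖ ≤ ‖x - z‖)
    (x : H) (hx : r < ‖x - c‖) (v : H) (hv : v ≠ 0) :
    Tendsto (fun t : ℝ => t⁻¹ • (P (x + t • v) - P x)) (𝓝[>] (0 : ℝ))
      (𝓝 ((r / ‖x - c‖ ^ 3) • (‖x - c‖ ^ 2 • v - ⟪x - c, v⟫ • (x - c)))) := by
  have sqrt_inner : ∀ u : H, Real.sqrt ⟪u, u⟫ = ‖u‖ := fun u => by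
    rw [real_inner_self_eq_norm_mul_norm, Real.sqrt_mul_self (norm_nonneg _)]
  set w : H := x - c with hw_def
  clear_value w
  have hw : 0 < ‖w‖ := lt_trans hr hx
  have hww : ⟪w, w⟫ ≠ 0 := by
    rw [real_inner_self_eq_norm_mul_norm]; positivity
  set φ : ℝ → H := fun t => c + r • (Real.sqrt ⟪w + t • v, w + t • v⟫)⁻¹ • (w + t • v)
    with hφ_def
  have hline : HasDerivAt (fun t : ℝ => w + t • v) v 0 := by
    simpa using ((hasDerivAt_id (0:ℝ)).smul_const v).const_add w
  have hinner : HasDerivAt (fun t : ℝ => ⟪w + t • v, w + t • v⟫) (2 * ⟪w, v⟫) 0 := by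
    have h := hline.inner ℝ hline
    simp only [zero_smul, add_zero] at h
    have e : ⟪w, v⟫ + ⟪v, w⟫ = 2 * ⟪w, v⟫ := by rw [real_inner_comm v w]; ring
    rwa [e] at h
  have hnorm : HasDerivAt (fun t : ℝ => Real.sqrt ⟪w + t • v, w + t • v⟫) (⟪w, v⟫ / ‖w‖) 0 := by
    have h := hinner.sqrt (by simpa using hww)
    have e : 2 * ⟪w, v⟫ / (2 * Real.sqrt ⟪w + (0:ℝ) • v, w + (0:ℝ) • v⟫) = ⟪w, v⟫ / ‖w‖ := by
      simp only [zero_smul, add_zero, sqrt_inner]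
      ring
    rwa [e] at h
  have hval0 : Real.sqrt ⟪w + (0:ℝ) • v, w + (0:ℝ) • v⟫ = ‖w‖ := by
    simp only [zero_smul, add_zero, sqrt_inner]
  have hinv : HasDerivAt (fun t : ℝ => (Real.sqrt ⟪w + t • v, w + t • v⟫)⁻¹)
      (-(⟪w, v⟫ / ‖w‖) / ‖w‖ ^ 2) 0 := by
    have h := hnorm.inv (by rw [hval0]; exact hw.ne')
    rwa [hval0] at h
  have hsmul : HasDerivAt (fun t : ℝ => (Real.sqrt ⟪w + t • v, w + t • v⟫)⁻¹ • (w + t • v))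
      (‖w‖⁻¹ • v + (-(⟪w, v⟫ / ‖w‖) / ‖w‖ ^ 2) • w) 0 := by
    have h := hinv.smul hline
    simp only [zero_smul, add_zero] at h
    rwa [sqrt_inner w] at h
  have hφ : HasDerivAt φ ((r / ‖w‖ ^ 3) • (‖w‖ ^ 2 • v - ⟪w, v⟫ • w)) 0 := by
    have h := (hsmul.const_smul r).const_add c
    have e : r • (‖w‖⁻¹ • v + (-(⟪w, v⟫ / ‖w‖) / ‖w‖ ^ 2) • w)
        = (r / ‖w‖ ^ 3) • (‖w‖ ^ 2 • v - ⟪w, v⟫ • w) := by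
      have hne : ‖w‖ ≠ 0 := hw.ne'
      match_scalars
      · field_simp
      · field_simp
    rwa [e] at h
  have hx' : r < ‖x - c‖ := by rw [← hw_def]; exact hx
  have hPx : P x = φ 0 := by
    rw [proj_ball_formula c r hr P hP x hx', ← hw_def, hφ_def]
    simp only [zero_smul, add_zero, sqrt_inner, div_eq_mul_inv, smul_smul]
  have heq : (fun t : ℝ => t⁻¹ • (P (x + t • v) - P x)) =ᶠ[𝓝[>] (0:ℝ)] slope φ 0 := by
    have hvpos : 0 < ‖v‖ := norm_pos_iff.mpr hv
    have hbd : ∀ᶠ t in 𝓝[>] (0:ℝ), t < (‖w‖ - r) / ‖v‖ := by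
      apply eventually_nhdsWithin_of_eventually_nhds
      have hpos : 0 < (‖w‖ - r) / ‖v‖ := div_pos (by linarith) hvpos
      exact eventually_lt_nhds hpos
    filter_upwards [hbd, self_mem_nhdsWithin] with t ht ht0
    have e : x + t • v - c = w + t • v := by rw [hw_def]; abel
    have hxt : r < ‖x + t • v - c‖ := by
      have h1 : ‖w‖ - ‖t • v‖ ≤ ‖x + t • v - c‖ := by
        rw [e]
        have h := norm_sub_norm_le w (-(t • v))
        simpa [sub_neg_eq_add] using h
      have h2 : ‖t • v‖ < ‖w‖ - r := by
        rw [norm_smul, Real.norm_eq_abs, abs_of_pos (mem_Ioi.mp ht0)]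
        have := mul_lt_mul_of_pos_right ht hvpos
        rwa [div_mul_cancel₀ _ hvpos.ne'] at this
      linarith
    have hPxt : P (x + t • v) = φ t := by
      rw [proj_ball_formula c r hr P hP (x + t • v) hxt, e, hφ_def]
      simp only [sqrt_inner, div_eq_mul_inv, smul_smul]
    rw [hPxt, hPx, slope_def_module]
    simp
  have hlim : Tendsto (slope φ 0) (𝓝[>] (0:ℝ))
      (𝓝 ((r / ‖w‖ ^ 3) • (‖w‖ ^ 2 • v - ⟪w, v⟫ • w))) :=
    (hasDerivAt_iff_tendsto_slope.mp hφ).mono_left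
      (nhdsWithin_mono 0 fun t ht => ne_of_gt ht)
  exact Tendsto.congr' heq.symm hlim
end

section
/- Let B be the closed unit ball of a real Hilbert space H and x ∈ H with ‖x‖ = 1. Suppose v ≠ 0 is such that there exists δ > 0 with ‖x + tv‖ ≥ 1 for all t ∈ (0, δ). Then the directional derivative of P_B at x along v exists and equals v − ⟨x, v⟩ x. -/
open scoped RealInnerProductSpace Topology
open Filter Set MeasureTheory

theorem stmt15 {H : Type*} [NormedAddCommGroup H] [InnerProductSpace ℝ H] [CompleteSpace H]
    (P : H → H)
    (hP : ∀ x, P x ∈ Metric.closedBall (0 : H) 1 ∧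
      ∀ z ∈ Metric.closedBall (0 : H) 1, ‖x - P x‖ ≤ ‖x - z‖)
    (x : H) (hx : ‖x‖ = 1) (v : H) (hv : v ≠ 0)
    (hup : ∃ δ : ℝ, 0 < δ ∧ ∀ t : ℝ, t ∈ Set.Ioo (0 : ℝ) δ → 1 ≤ ‖x + t • v‖) :
    Tendsto (fun t : ℝ => t⁻¹ • (P (x + t • v) - P x)) (𝓝[>] (0 : ℝ))
      (𝓝 (v - ⟪x, v⟫ • x)) := by
  obtain ⟨δ, hδ, hδv⟩ := hup
  -- P x = x
  have hPx : P x = x := by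
    obtain ⟨_, hmin⟩ := hP x
    have := hmin x (by simpa [Metric.mem_closedBall, dist_zero_right, hx])
    simp only [sub_self, norm_zero] at this
    have : ‖x - P x‖ = 0 := le_antisymm this (norm_nonneg _)
    have := norm_sub_eq_zero_iff.mp this
    exact this.symm
  -- projection formula for points outside the ball
  have hproj : ∀ z : H, 1 ≤ ‖z‖ → P z = ‖z‖⁻¹ • z := by
    intro z hz
    have hz0 : z ≠ 0 := by intro h; rw [h, norm_zero] at hz; linarith
    have hzpos : (0:ℝ) < ‖z‖ := lt_of_lt_of_le one_pos hz
    obtain ⟨hmem, hmin⟩ := hP z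
    have hw1 : ‖P z‖ ≤ 1 := by simpa [Metric.mem_closedBall, dist_zero_right] using hmem
    have hcand : ‖z‖⁻¹ • z ∈ Metric.closedBall (0:H) 1 := by
      simp [Metric.mem_closedBall, dist_zero_right, norm_smul, abs_of_pos (inv_pos.mpr hzpos),
        inv_mul_cancel₀ hzpos.ne']
    have h1 : ‖z - P z‖ ≤ ‖z‖ - 1 := by
      have := hmin _ hcand
      have heq : ‖z - ‖z‖⁻¹ • z‖ = ‖z‖ - 1 := by
        have : z - ‖z‖⁻¹ • z = (1 - ‖z‖⁻¹) • z := by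
          rw [sub_smul, one_smul]
        rw [this, norm_smul, Real.norm_eq_abs, abs_of_nonneg, sub_mul, one_mul,
          inv_mul_cancel₀ hzpos.ne']
        have : ‖z‖⁻¹ ≤ 1 := by
          rw [inv_le_one_iff₀]; right; exact hz
        linarith
      linarith [heq ▸ this]
    have h2 : ‖z‖ - ‖P z‖ ≤ ‖z - P z‖ := norm_sub_norm_le _ _
    have hw : ‖P z‖ = 1 := le_antisymm hw1 (by linarith)
    have h3 : ‖z - P z‖ = ‖z‖ - 1 := le_antisymm h1 (by linarith)
    have hinner : ⟪z, P z⟫ = ‖z‖ * ‖P z‖ := by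
      have hsq := norm_sub_sq_real z (P z)
      rw [hw] at hsq ⊢
      rw [h3] at hsq
      nlinarith
    have hze := inner_eq_norm_mul_iff_real.mp hinner
    rw [hw, one_smul] at hze
    calc P z = ‖z‖⁻¹ • (‖z‖ • P z) := by
            rw [smul_smul, inv_mul_cancel₀ hzpos.ne', one_smul]
      _ = ‖z‖⁻¹ • z := by rw [← hze]
  -- the smooth extension f
  set q : ℝ → ℝ := fun t => 1 + 2 * ⟪x, v⟫ * t + ‖v‖ ^ 2 * t ^ 2 with hq
  have hnorm : ∀ t : ℝ, ‖x + t • v‖ = Real.sqrt (q t) := by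
    intro t
    have : ‖x + t • v‖ ^ 2 = q t := by
      rw [← real_inner_self_eq_norm_sq]
      simp only [inner_add_add_self, real_inner_smul_left, real_inner_smul_right, hq]
      rw [real_inner_self_eq_norm_sq, real_inner_self_eq_norm_sq, hx, real_inner_comm v x]
      ring
    rw [← this, Real.sqrt_sq (norm_nonneg _)]
  set f : ℝ → H := fun t => (Real.sqrt (q t))⁻¹ • (x + t • v) with hf
  have hq0 : q 0 = 1 := by simp [hq]
  have hqderiv : HasDerivAt q (2 * ⟪x, v⟫) 0 := by
    have : HasDerivAt q (0 + 2 * ⟪x, v⟫ * 1 + ‖v‖ ^ 2 * (2 * 0 ^ 1)) 0 := by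
      exact ((hasDerivAt_const _ _).add (((hasDerivAt_id (0:ℝ)).const_mul _))).add
        ((hasDerivAt_pow 2 (0:ℝ)).const_mul _)
    simpa using this
  have hsq : HasDerivAt (fun t => Real.sqrt (q t)) (⟪x, v⟫) 0 := by
    have := (Real.hasDerivAt_sqrt (by rw [hq0]; norm_num : q 0 ≠ 0)).comp 0 hqderiv
    simp [hq0] at this
    exact this
  have hinv : HasDerivAt (fun t => (Real.sqrt (q t))⁻¹) (-⟪x, v⟫) 0 := by
    have := hsq.inv (by rw [hq0]; norm_num)
    simp [hq0] at this
    exact this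
  have hlin : HasDerivAt (fun t : ℝ => x + t • v) v 0 := by
    simpa using ((hasDerivAt_id (0:ℝ)).smul_const v).const_add x
  have hfderiv : HasDerivAt f (v - ⟪x, v⟫ • x) 0 := by
    have h := hinv.smul hlin
    have e : (Real.sqrt (q 0))⁻¹ • v + (-⟪x, v⟫) • (x + (0:ℝ) • v) = v - ⟪x, v⟫ • x := by
      rw [hq0, Real.sqrt_one]
      module
    exact e ▸ h
  -- slope convergence
  have hslope : Tendsto (fun t : ℝ => t⁻¹ • (f t - f 0)) (𝓝[>] (0:ℝ)) (𝓝 (v - ⟪x, v⟫ • x)) := by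
    have := (hasDerivAt_iff_tendsto_slope.mp hfderiv).mono_left
      (nhdsWithin_mono _ (fun t ht => ne_of_gt ht : Ioi (0:ℝ) ⊆ {(0:ℝ)}ᶜ))
    refine this.congr (fun t => ?_)
    simp [slope_def_field, slope, vsub_eq_sub]
  have hf0 : f 0 = x := by simp [hf, hq0]
  refine hslope.congr' ?_
  filter_upwards [Ioo_mem_nhdsGT_of_mem (Set.left_mem_Ico.mpr hδ)] with t ht
  have h1 : 1 ≤ ‖x + t • v‖ := hδv t ht
  rw [hf0, hPx, hproj _ h1, hnorm t]
end
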